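/- Suppose F ⊆ ^λκ is a κ⁺-independent family of functions from λ to κ, where κ ≤ λ are infinite cardinals. Then every subset of F of cardinality κ is unbounded in the everywhere domination order on ^λκ: for every A ⊆ F with |A| = κ there is no g : λ → κ with f ≤ g for all f ∈ A. -/

import Mathlib

open Cardinal Order

/-- The cofinality of the everywhere (pointwise) domination order on functions `X → K`. -/
noncomputable def everyCof (X K : Type*) [LE K] : Cardinal :=
  sInf {c | ∃ D : Set (X → K), #D = c ∧ ∀ f : X → K, ∃ g ∈ D, ∀ x, f x ≤ g x}

/-- The cofinality of the eventual domination order on functions `X → K`. -/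
noncomputable def evenCof (X K : Type*) [LE X] [LE K] : Cardinal :=
  sInf {c | ∃ D : Set (X → K), #D = c ∧
    ∀ f : X → K, ∃ g ∈ D, ∃ a : X, ∀ b : X, a ≤ b → f b ≤ g b}

theorem stmt_8 (k l : Cardinal) (hk : ℵ₀ ≤ k) (hkl : k ≤ l)
    (F : Set (l.ord.ToType → k.ord.ToType))
    (hind : ∀ F₀ ⊆ F, #F₀ < Order.succ k →
      ∀ φ : F₀ → k.ord.ToType, ∃ x : l.ord.ToType, ∀ f : F₀, (f : l.ord.ToType → k.ord.ToType) x = φ f)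
    (A : Set (l.ord.ToType → k.ord.ToType)) (hAF : A ⊆ F) (hA : #A = k) :
    ¬ ∃ g : l.ord.ToType → k.ord.ToType, ∀ f ∈ A, ∀ x, f x ≤ g x := by
  rintro ⟨g, hg⟩
  have hmk : #A = #(k.ord.ToType) := by
    rw [hA, Cardinal.mk_toType, Cardinal.card_ord]
  obtain ⟨e⟩ := Cardinal.eq.mp hmk
  obtain ⟨x, hx⟩ := hind A hAF (by rw [hA]; exact Order.lt_succ k) e
  haveI : NoMaxOrder k.ord.ToType := Cardinal.noMaxOrder hk
  obtain ⟨y, hy⟩ := exists_gt (g x)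
  have h1 : ((e.symm y : A) : l.ord.ToType → k.ord.ToType) x = y := by
    rw [hx (e.symm y), Equiv.apply_symm_apply]
  have h2 := hg (e.symm y) (e.symm y).2 x
  rw [h1] at h2
  exact absurd h2 (not_le.mpr hy)
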